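/- arXiv:2508.10882 — 5 statements merged into one kernel-verified Lean document; each statement's English description precedes it below -/
import Mathlib

section
/- Let A be a G-bigraded bialgebra over a field F, i.e. a bialgebra that is G × G-graded as an algebra with Δ(A_{α,β}) ⊆ Σ_γ A_{α,γ} ⊗ A_{-γ,β} and ε(A_{α,β}) = 0 whenever α + β ≠ 0. Let ζ : G × G → F^* be a skew bicharacter and let A_ζ denote the algebra obtained by twisting the multiplication: a ∘ b = ζ(α,α')ζ(β,β')^{-1} ab for a ∈ A_{α,β}, b ∈ A_{α',β'}. Then A_ζ, equipped with the same coproduct Δ and counit ε as A, is a bialgebra; in particular Δ : A_ζ → A_ζ ⊗ A_ζ and ε : A_ζ → F are algebra homomorphisms for the twisted product. -/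
open TensorProduct

/-- the bicharacter twist of a `G`-bigraded bialgebra is again a
bialgebra: the (unchanged) coproduct and counit are algebra homomorphisms for
the twisted products. -/
theorem stmt2 {G F A : Type*} [AddCommGroup G] [DecidableEq G]
    [Field F] [Ring A] [Bialgebra F A]
    (𝒜 : G × G → Submodule F A) [GradedAlgebra 𝒜]
    (hΔ : ∀ (α β : G) (x : A), x ∈ 𝒜 (α, β) →
      Coalgebra.comul (R := F) x ∈
        ⨆ γ : G, LinearMap.range
          (TensorProduct.map (𝒜 (α, γ)).subtype (𝒜 (-γ, β)).subtype))
    (hε : ∀ (α β : G) (x : A), x ∈ 𝒜 (α, β) → α + β ≠ 0 →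
      Coalgebra.counit (R := F) x = 0)
    (ζ : G → G → Fˣ)
    (hζadd₁ : ∀ α β γ, ζ (α + β) γ = ζ α γ * ζ β γ)
    (hζadd₂ : ∀ α β γ, ζ α (β + γ) = ζ α β * ζ α γ)
    (hζskew : ∀ α β, ζ α β = (ζ β α)⁻¹)
    (hζdiag : ∀ α, ζ α α = 1)
    (mul : A →ₗ[F] A →ₗ[F] A)
    (hmul : ∀ (α β α' β' : G) (a b : A), a ∈ 𝒜 (α, β) → b ∈ 𝒜 (α', β') →
      mul a b = ((ζ α α' * (ζ β β')⁻¹ : Fˣ) : F) • (a * b))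
    (mulT : (A ⊗[F] A) →ₗ[F] (A ⊗[F] A) →ₗ[F] (A ⊗[F] A))
    (hmulT : ∀ a b c d : A,
      mulT (a ⊗ₜ[F] c) (b ⊗ₜ[F] d) = (mul a b) ⊗ₜ[F] (mul c d)) :
    (∀ a b : A, Coalgebra.comul (R := F) (mul a b)
        = mulT (Coalgebra.comul (R := F) a) (Coalgebra.comul (R := F) b)) ∧
    (∀ a b : A, Coalgebra.counit (R := F) (mul a b)
        = Coalgebra.counit (R := F) a * Coalgebra.counit (R := F) b) ∧
    Coalgebra.comul (R := F) (1 : A) = (1 : A) ⊗ₜ[F] (1 : A) ∧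
    Coalgebra.counit (R := F) (1 : A) = (1 : F) := by
  -- basic bicharacter facts
  have hζzero₁ : ∀ γ, ζ 0 γ = 1 := by
    intro γ
    have h := hζadd₁ 0 0 γ
    rw [add_zero] at h
    exact left_eq_mul.mp h
  have hζneg₁ : ∀ α γ, ζ (-α) γ = (ζ α γ)⁻¹ := by
    intro α γ
    have h := hζadd₁ α (-α) γ
    rw [add_neg_cancel, hζzero₁] at h
    exact eq_inv_of_mul_eq_one_left (by rw [mul_comm]; exact h.symm)
  have hζzero₂ : ∀ γ, ζ γ 0 = 1 := by
    intro γ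
    have h := hζadd₂ γ 0 0
    rw [add_zero] at h
    exact left_eq_mul.mp h
  have hζneg₂ : ∀ α γ, ζ α (-γ) = (ζ α γ)⁻¹ := by
    intro α γ
    have h := hζadd₂ α γ (-γ)
    rw [add_neg_cancel, hζzero₂] at h
    exact eq_inv_of_mul_eq_one_left (by rw [mul_comm]; exact h.symm)
  have hζnegneg : ∀ α γ, ζ (-α) (-γ) = ζ α γ := by
    intro α γ; rw [hζneg₁, hζneg₂, inv_inv]
  -- homogeneous case of the counit claim
  have hcounit : ∀ (α β α' β' : G) (a b : A), a ∈ 𝒜 (α, β) → b ∈ 𝒜 (α', β') →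
      Coalgebra.counit (R := F) (mul a b)
        = Coalgebra.counit (R := F) a * Coalgebra.counit (R := F) b := by
    intro α β α' β' a b ha hb
    rw [hmul α β α' β' a b ha hb, map_smul, Bialgebra.counit_mul]
    by_cases h1 : α + β = 0
    · by_cases h2 : α' + β' = 0
      · have hβ : β = -α := eq_neg_of_add_eq_zero_right h1
        have hβ' : β' = -α' := eq_neg_of_add_eq_zero_right h2
        subst hβ hβ'
        rw [hζnegneg, mul_inv_cancel, Units.val_one, one_smul]
      · rw [hε α' β' b hb h2]; simp
    · rw [hε α β a ha h1]; simp
  -- the key multiplicativity on the ranges appearing in hΔ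
  have key : ∀ (α β α' β' : G) (a b : A), a ∈ 𝒜 (α, β) → b ∈ 𝒜 (α', β') →
      Coalgebra.comul (R := F) (mul a b)
        = mulT (Coalgebra.comul (R := F) a) (Coalgebra.comul (R := F) b) := by
    intro α β α' β' a b ha hb
    set c : F := ((ζ α α' * (ζ β β')⁻¹ : Fˣ) : F) with hc
    have main : ∀ x ∈ ⨆ γ : G, LinearMap.range
          (TensorProduct.map (𝒜 (α, γ)).subtype (𝒜 (-γ, β)).subtype),
        ∀ y ∈ ⨆ γ' : G, LinearMap.range
          (TensorProduct.map (𝒜 (α', γ')).subtype (𝒜 (-γ', β')).subtype),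
        mulT x y = c • (x * y) := by
      intro x hx
      refine Submodule.iSup_induction (x := x)
        (motive := fun x => ∀ y ∈ ⨆ γ' : G, LinearMap.range
          (TensorProduct.map (𝒜 (α', γ')).subtype (𝒜 (-γ', β')).subtype),
          mulT x y = c • (x * y)) _ hx ?_ (by simp) ?_
      · intro γ x hxγ
        obtain ⟨z, rfl⟩ := hxγ
        induction z using TensorProduct.induction_on with
        | zero => simp
        | tmul p q =>
          intro y hy
          refine Submodule.iSup_induction (x := y)
            (motive := fun y => mulT _ y = c • (_ * y)) _ hy ?_ (by simp) ?_
          · intro γ' y hyγ'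
            obtain ⟨w, rfl⟩ := hyγ'
            induction w using TensorProduct.induction_on with
            | zero => simp
            | tmul r s =>
              rw [TensorProduct.map_tmul, TensorProduct.map_tmul, hmulT,
                Submodule.coe_subtype, Submodule.coe_subtype,
                Submodule.coe_subtype, Submodule.coe_subtype,
                hmul α γ α' γ' (p : A) (r : A) p.2 r.2,
                hmul (-γ) β (-γ') β' (q : A) (s : A) q.2 s.2,
                Algebra.TensorProduct.tmul_mul_tmul, hζnegneg, tmul_smul,
                ← TensorProduct.smul_tmul', smul_smul]
              congr 1
              rw [hc]
              push_cast
              field_simp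
            | add w₁ w₂ h1 h2 =>
              simp only [map_add, LinearMap.map_add, mul_add, smul_add] at h1 h2 ⊢
              rw [h1, h2]
          · intro y₁ y₂ h1 h2
            simp only [map_add, mul_add, smul_add] at h1 h2 ⊢
            rw [h1, h2]
        | add z₁ z₂ h1 h2 =>
          intro y hy
          simp only [map_add, LinearMap.add_apply, add_mul, smul_add] at h1 h2 ⊢
          rw [h1 y hy, h2 y hy]
      · intro x₁ x₂ h1 h2 y hy
        simp only [map_add, LinearMap.add_apply, add_mul, smul_add] at h1 h2 ⊢
        rw [h1 y hy, h2 y hy]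
    rw [hmul α β α' β' a b ha hb, map_smul, Bialgebra.comul_mul,
      main _ (hΔ α β a ha) _ (hΔ α' β' b hb)]
  refine ⟨?_, ?_, ?_, Bialgebra.counit_one⟩
  · intro a b
    refine DirectSum.Decomposition.inductionOn 𝒜
      (motive := fun a => ∀ b, Coalgebra.comul (R := F) (mul a b)
        = mulT (Coalgebra.comul (R := F) a) (Coalgebra.comul (R := F) b))
      (by simp) (fun {i} x => ?_) (fun m m' h h' b => ?_) a b
    · refine DirectSum.Decomposition.inductionOn 𝒜
        (motive := fun b => Coalgebra.comul (R := F) (mul (x : A) b)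
          = mulT (Coalgebra.comul (R := F) (x : A)) (Coalgebra.comul (R := F) b))
        (by simp) (fun {j} y => ?_) (fun m m' h h' => ?_)
      · exact key i.1 i.2 j.1 j.2 (x : A) (y : A) x.2 y.2
      · simp only [map_add, mul_add, smul_add] at h h' ⊢
        rw [h, h']
    · simp only [map_add, LinearMap.add_apply] at h h' ⊢
      rw [h b, h' b]
  · intro a b
    refine DirectSum.Decomposition.inductionOn 𝒜
      (motive := fun a => ∀ b, Coalgebra.counit (R := F) (mul a b)
        = Coalgebra.counit (R := F) a * Coalgebra.counit (R := F) b)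
      (by simp) (fun {i} x => ?_) (fun m m' h h' b => ?_) a b
    · refine DirectSum.Decomposition.inductionOn 𝒜
        (motive := fun b => Coalgebra.counit (R := F) (mul (x : A) b)
          = Coalgebra.counit (R := F) (x : A) * Coalgebra.counit (R := F) b)
        (by simp) (fun {j} y => ?_) (fun m m' h h' => ?_)
      · exact hcounit i.1 i.2 j.1 j.2 (x : A) (y : A) x.2 y.2
      · simp only [map_add, mul_add] at h h' ⊢
        rw [h, h']
    · simp only [map_add, LinearMap.add_apply, add_mul] at h h' ⊢
      rw [h b, h' b]
  · rw [Bialgebra.comul_one, Algebra.TensorProduct.one_def]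
end

section
/- Let G be a group, F a field, H = F[G] the group algebra, and A an algebra over F that is an H–H-bimodule such that the left H-action makes A a left module-algebra over H and the right H-action makes A a right module-algebra over H. Then the formula (x ⊗ g)·(y ⊗ h) = (x·h)(g·y) ⊗ gh, for x,y ∈ A and g,h ∈ G, extended bilinearly, defines an associative unital algebra structure on A ⊗ H with unit 1_A ⊗ 1_G. -/
open TensorProduct

/-- the crossed product multiplication
`(x ⊗ g)·(y ⊗ h) = (x·h)(g·y) ⊗ gh` on `A ⊗ F[G]` is associative with unit
`1 ⊗ 1`, when `A` is simultaneously a left and right module-algebra over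
`F[G]` (equivalently, `G` acts on both sides by algebra endomorphisms,
the left action being a left action, the right action a right action,
and the two actions commute). -/
theorem stmt6 {G F A : Type*} [Group G] [Field F] [Ring A] [Algebra F A]
    (l r : G → (A →ₐ[F] A))
    (hl1 : l 1 = AlgHom.id F A)
    (hlmul : ∀ g h, l (g * h) = (l g).comp (l h))
    (hr1 : r 1 = AlgHom.id F A)
    (hrmul : ∀ g h, r (g * h) = (r h).comp (r g))
    (hcomm : ∀ (g h : G) (a : A), l g (r h a) = r h (l g a))
    (mul : (A ⊗[F] MonoidAlgebra F G) →ₗ[F] (A ⊗[F] MonoidAlgebra F G) →ₗ[F]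
      (A ⊗[F] MonoidAlgebra F G))
    (hmul : ∀ (x y : A) (g h : G),
      mul (x ⊗ₜ[F] MonoidAlgebra.of F G g) (y ⊗ₜ[F] MonoidAlgebra.of F G h)
        = (r h x * l g y) ⊗ₜ[F] MonoidAlgebra.of F G (g * h)) :
    (∀ a b c, mul (mul a b) c = mul a (mul b c)) ∧
    (∀ a, mul ((1 : A) ⊗ₜ[F] (1 : MonoidAlgebra F G)) a = a) ∧
    (∀ a, mul a ((1 : A) ⊗ₜ[F] (1 : MonoidAlgebra F G)) = a) := by
  set S : Set (A ⊗[F] MonoidAlgebra F G) :=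
    {z | ∃ x g, z = x ⊗ₜ[F] MonoidAlgebra.of F G g} with hS
  have hspan : ∀ a : A ⊗[F] MonoidAlgebra F G, a ∈ Submodule.span F S := by
    intro a
    induction a using TensorProduct.induction_on with
    | zero => exact Submodule.zero_mem _
    | tmul x φ =>
      induction φ using MonoidAlgebra.induction_on with
      | of g => exact Submodule.subset_span ⟨x, g, rfl⟩
      | add f g hf hg =>
        rw [TensorProduct.tmul_add]; exact Submodule.add_mem _ hf hg
      | smul c f hf =>
        rw [TensorProduct.tmul_smul]; exact Submodule.smul_mem _ c hf
    | add x y hx hy => exact Submodule.add_mem _ hx hy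
  have hone : (1 : MonoidAlgebra F G) = MonoidAlgebra.of F G 1 := rfl
  refine ⟨?_, ?_, ?_⟩
  · intro a b c
    induction hspan a using Submodule.span_induction with
    | mem a ha =>
      obtain ⟨x, g, rfl⟩ := ha
      induction hspan b using Submodule.span_induction with
      | mem b hb =>
        obtain ⟨y, h, rfl⟩ := hb
        induction hspan c using Submodule.span_induction with
        | mem c hc =>
          obtain ⟨z, k, rfl⟩ := hc
          rw [hmul, hmul, hmul, hmul]
          congr 1
          · simp only [map_mul, hrmul, hlmul, AlgHom.comp_apply, hcomm]
            rw [mul_assoc]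
          · rw [mul_assoc]
        | zero => simp only [map_zero]
        | add c₁ c₂ _ _ h1 h2 => simp only [map_add, h1, h2]
        | smul t c _ hc => simp only [map_smul, hc]
      | zero => simp only [map_zero, LinearMap.zero_apply]
      | add b₁ b₂ _ _ h1 h2 =>
        simp only [map_add, LinearMap.add_apply, h1, h2]
      | smul t b _ hb => simp only [map_smul, LinearMap.smul_apply, hb]
    | zero => simp only [map_zero, LinearMap.zero_apply]
    | add a₁ a₂ _ _ h1 h2 => simp only [map_add, LinearMap.add_apply, h1, h2]
    | smul t a _ ha => simp only [map_smul, LinearMap.smul_apply, ha]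
  · intro a
    induction hspan a using Submodule.span_induction with
    | mem a ha =>
      obtain ⟨x, g, rfl⟩ := ha
      rw [hone, hmul, hl1, map_one]
      simp
    | zero => simp only [map_zero, LinearMap.zero_apply]
    | add a₁ a₂ _ _ h1 h2 => simp only [map_add, LinearMap.add_apply, h1, h2]
    | smul t a _ ha => simp only [map_smul, LinearMap.smul_apply, ha]
  · intro a
    induction hspan a using Submodule.span_induction with
    | mem a ha =>
      obtain ⟨x, g, rfl⟩ := ha
      rw [hone, hmul, hr1, map_one]
      simp
    | zero => simp only [map_zero, LinearMap.zero_apply]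
    | add a₁ a₂ _ _ h1 h2 => simp only [map_add, LinearMap.add_apply, h1, h2]
    | smul t a _ ha => simp only [map_smul, LinearMap.smul_apply, ha]
end

section
/- Let G be an abelian group, F an algebraically closed field, A a G × G-graded algebra over F, and σ : G × G → F^* a skew bicharacter admitting square roots σ(g,h)^{1/2} chosen so that g ↦ σ(g,·)^{1/2} is a homomorphism in each variable. Make A an F[G]–F[G]-bimodule via e^g · x = σ(g, h+k)^{1/2} x and x · e^g = σ(h+k, g)^{1/2} x for x ∈ A_{h,k}, and equip A ⊗ F[G] with the crossed product multiplication (x ⊗ e^g)(y ⊗ e^{g'}) = (x·e^{g'})(e^g·y) ⊗ e^{g+g'}. Let A' = ⊕_{g,h ∈ G} A_{g,h} ⊗ e^{g-h} ⊆ A ⊗ F[G]. Then A' is a subalgebra, and the map φ : A → A', φ(x) = x ⊗ e^{g-h} for x ∈ A_{g,h}, is an algebra isomorphism from the twisted algebra A_σ (with product a ∘ b = σ(g,g')σ(h,h')^{-1} ab for a ∈ A_{g,h}, b ∈ A_{g',h'}) onto A'. -/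
open TensorProduct

/-- the bicharacter twist `A_σ` of a `G × G`-graded algebra `A`
is isomorphic, via `φ(x) = x ⊗ e^{g-h}` for `x ∈ A_{g,h}`, to the subalgebra
`A' = ⊕ A_{g,h} ⊗ e^{g-h}` of the crossed product `A ⊗ F[G]`. -/
theorem stmt7 {G F A : Type*} [AddCommGroup G] [DecidableEq G]
    [Field F] [IsAlgClosed F] [Ring A] [Algebra F A]
    (𝒜 : G × G → Submodule F A) [GradedAlgebra 𝒜]
    (σ σh : G → G → Fˣ)
    (hsq : ∀ g h, σh g h * σh g h = σ g h)
    (hσadd₁ : ∀ a b c, σ (a + b) c = σ a c * σ b c)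
    (hσadd₂ : ∀ a b c, σ a (b + c) = σ a b * σ a c)
    (hσskew : ∀ a b, σ a b * σ b a = 1)
    (hσdiag : ∀ a, σ a a = 1)
    (hhadd₁ : ∀ a b c, σh (a + b) c = σh a c * σh b c)
    (hhadd₂ : ∀ a b c, σh a (b + c) = σh a b * σh a c)
    (mul : (A ⊗[F] AddMonoidAlgebra F G) →ₗ[F] (A ⊗[F] AddMonoidAlgebra F G) →ₗ[F]
      (A ⊗[F] AddMonoidAlgebra F G))
    (hmul : ∀ (g g' h k h' k' : G) (x y : A), x ∈ 𝒜 (h, k) → y ∈ 𝒜 (h', k') →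
      mul (x ⊗ₜ[F] (AddMonoidAlgebra.single g (1 : F)))
          (y ⊗ₜ[F] (AddMonoidAlgebra.single g' (1 : F)))
        = ((σh (h + k) g' * σh g (h' + k') : Fˣ) : F) •
            ((x * y) ⊗ₜ[F] (AddMonoidAlgebra.single (g + g') (1 : F))))
    (mulσ : A →ₗ[F] A →ₗ[F] A)
    (hmulσ : ∀ (g h g' h' : G) (x y : A), x ∈ 𝒜 (g, h) → y ∈ 𝒜 (g', h') →
      mulσ x y = ((σ g g' * (σ h h')⁻¹ : Fˣ) : F) • (x * y))
    (φ : A →ₗ[F] (A ⊗[F] AddMonoidAlgebra F G))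
    (hφ : ∀ (g h : G) (x : A), x ∈ 𝒜 (g, h) →
      φ x = x ⊗ₜ[F] (AddMonoidAlgebra.single (g - h) (1 : F)))
    (A' : Submodule F (A ⊗[F] AddMonoidAlgebra F G))
    (hA' : A' = Submodule.span F {t | ∃ (g h : G) (x : A), x ∈ 𝒜 (g, h) ∧
      t = x ⊗ₜ[F] (AddMonoidAlgebra.single (g - h) (1 : F))}) :
    ((1 : A) ⊗ₜ[F] (AddMonoidAlgebra.single (0 : G) (1 : F)) ∈ A') ∧
    (∀ a b, a ∈ A' → b ∈ A' → mul a b ∈ A') ∧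
    Function.Injective φ ∧
    LinearMap.range φ = A' ∧
    (∀ x y : A, φ (mulσ x y) = mul (φ x) (φ y)) := by
  classical
  subst hA'
  set S : Set (A ⊗[F] AddMonoidAlgebra F G) :=
    {t | ∃ (g h : G) (x : A), x ∈ 𝒜 (g, h) ∧
      t = x ⊗ₜ[F] (AddMonoidAlgebra.single (g - h) (1 : F))} with hS
  -- basic facts about σh
  have h0₂ : ∀ a : G, σh a 0 = 1 := by
    intro a
    have := (hhadd₂ a 0 0).symm
    rw [add_zero] at this
    exact mul_eq_left.mp this
  have h0₁ : ∀ a : G, σh 0 a = 1 := by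
    intro a
    have := (hhadd₁ 0 0 a).symm
    rw [add_zero] at this
    exact mul_eq_left.mp this
  have hneg₂ : ∀ a b : G, σh a (-b) = (σh a b)⁻¹ := by
    intro a b
    have := hhadd₂ a b (-b)
    rw [add_neg_cancel, h0₂] at this
    exact eq_inv_of_mul_eq_one_right this.symm
  have hneg₁ : ∀ a b : G, σh (-a) b = (σh a b)⁻¹ := by
    intro a b
    have := hhadd₁ a (-a) b
    rw [add_neg_cancel, h0₁] at this
    exact eq_inv_of_mul_eq_one_right this.symm
  -- the scalar identity
  have key : ∀ g h g' h' : G,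
      σ g g' * (σ h h')⁻¹ = σh (g + h) (g' - h') * σh (g - h) (g' + h') := by
    intro g h g' h'
    refine Units.ext ?_
    simp only [sub_eq_add_neg, hhadd₁, hhadd₂, hneg₁, hneg₂, ← hsq,
      Units.val_mul, Units.val_inv_eq_inv_val]
    field_simp
  -- coefficient-extraction linear maps
  let T : G → (A ⊗[F] AddMonoidAlgebra F G →ₗ[F] A) := fun d =>
    (TensorProduct.rid F A).toLinearMap ∘ₗ LinearMap.lTensor A (Finsupp.lapply d ∘ₗ (AddMonoidAlgebra.coeffLinearEquiv F).toLinearMap)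
  have hT : ∀ (d e : G) (x : A),
      T d (x ⊗ₜ[F] AddMonoidAlgebra.single e (1 : F)) = if e = d then x else 0 := by
    intro d e x
    show (TensorProduct.rid F A) (x ⊗ₜ[F] ((Finsupp.lapply (R := F) d) (Finsupp.single e (1 : F)))) = _
    rw [Finsupp.lapply_apply, Finsupp.single_apply, TensorProduct.rid_tmul]
    split <;> simp
  -- component extraction through φ
  have comp_eq : ∀ (g h : G) (x : A),
      ((DirectSum.decompose 𝒜 (T (g - h) (φ x)) (g, h) : 𝒜 (g, h)) : A)
        = ((DirectSum.decompose 𝒜 x (g, h) : 𝒜 (g, h)) : A) := by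
    intro g h
    refine DirectSum.Decomposition.inductionOn 𝒜 ?_ ?_ ?_
    · simp
    · rintro ⟨g', h'⟩ ⟨x, hx⟩
      simp only
      rw [hφ g' h' x hx, hT]
      by_cases hd : g' - h' = g - h
      · rw [if_pos hd]
      · rw [if_neg hd, DirectSum.decompose_zero]
        have hne : (g', h') ≠ (g, h) := by
          intro hc
          exact hd (by rw [Prod.mk.injEq] at hc; rw [hc.1, hc.2])
        rw [DirectSum.decompose_of_mem_ne 𝒜 hx hne]
        simp
    · intro x y hx hy
      rw [map_add, map_add, DirectSum.decompose_add, DirectSum.decompose_add]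
      simp only [DirectSum.add_apply, Submodule.coe_add]
      rw [hx, hy]
  -- injectivity
  have hker : ∀ x : A, φ x = 0 → x = 0 := by
    intro x hx
    apply (DirectSum.decompose 𝒜).injective
    rw [DirectSum.decompose_zero]
    refine DFinsupp.ext fun i => ?_
    obtain ⟨g, h⟩ := i
    have := comp_eq g h x
    rw [hx, map_zero, DirectSum.decompose_zero] at this
    simp only [DirectSum.zero_apply, ZeroMemClass.coe_zero] at this
    exact Subtype.ext this.symm
  have hinj : Function.Injective φ := by
    intro x y hxy
    have : φ (x - y) = 0 := by rw [map_sub, hxy, sub_self]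
    have := hker _ this
    exact sub_eq_zero.mp this
  -- range ⊆ span
  have hrange_le : ∀ x : A, φ x ∈ Submodule.span F S := by
    refine DirectSum.Decomposition.inductionOn 𝒜 ?_ ?_ ?_
    · rw [map_zero]; exact Submodule.zero_mem _
    · rintro ⟨g, h⟩ ⟨x, hx⟩
      simp only
      rw [hφ g h x hx]
      exact Submodule.subset_span ⟨g, h, x, hx, rfl⟩
    · intro x y hx hy
      rw [map_add]
      exact Submodule.add_mem _ hx hy
  refine ⟨?_, ?_, hinj, ?_, ?_⟩
  · -- 1 ⊗ e^0 ∈ A'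
    apply Submodule.subset_span
    exact ⟨0, 0, 1, SetLike.one_mem_graded 𝒜, by rw [sub_zero]⟩
  · -- closure under mul
    intro a b ha hb
    induction ha using Submodule.span_induction with
    | zero => rw [map_zero, LinearMap.zero_apply]; exact Submodule.zero_mem _
    | add x y _ _ hx hy => rw [map_add, LinearMap.add_apply]; exact Submodule.add_mem _ hx hy
    | smul c x _ hx => rw [map_smul, LinearMap.smul_apply]; exact Submodule.smul_mem _ _ hx
    | mem a hmem =>
      induction hb using Submodule.span_induction with
      | zero => rw [map_zero]; exact Submodule.zero_mem _
      | add x y _ _ hx hy => rw [map_add]; exact Submodule.add_mem _ hx hy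
      | smul c x _ hx => rw [map_smul]; exact Submodule.smul_mem _ _ hx
      | mem b hmemb =>
        obtain ⟨g, h, x, hx, rfl⟩ := hmem
        obtain ⟨g', h', y, hy, rfl⟩ := hmemb
        rw [hmul (g - h) (g' - h') g h g' h' x y hx hy]
        apply Submodule.smul_mem
        apply Submodule.subset_span
        refine ⟨g + g', h + h', x * y, SetLike.mul_mem_graded hx hy, ?_⟩
        congr 2
        abel
  · -- range φ = A'
    apply le_antisymm
    · rintro t ⟨x, rfl⟩
      exact hrange_le x
    · rw [Submodule.span_le]
      rintro t ⟨g, h, x, hx, rfl⟩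
      exact ⟨x, (hφ g h x hx)⟩
  · -- multiplicativity
    have main : ∀ x y : A, φ (mulσ x y) = mul (φ x) (φ y) := by
      refine DirectSum.Decomposition.inductionOn 𝒜 ?_ ?_ ?_
      · intro y; simp
      · rintro ⟨g, h⟩ x
        refine DirectSum.Decomposition.inductionOn 𝒜 ?_ ?_ ?_
        · simp
        · rintro ⟨g', h'⟩ y
          rw [hφ g h x.1 x.2, hφ g' h' y.1 y.2, hmul _ _ _ _ _ _ _ _ x.2 y.2,
              hmulσ g h g' h' x.1 y.1 x.2 y.2, map_smul,
              hφ (g + g') (h + h') (x.1 * y.1) (SetLike.mul_mem_graded x.2 y.2)]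
          have e1 : (g - h) + (g' - h') = (g + g') - (h + h') := by abel
          rw [e1, key g h g' h']
        · intro y y' hy hy'
          simp only [map_add, LinearMap.add_apply, hy, hy']
      · intro x x' hx hx' y
        simp only [map_add, LinearMap.add_apply, hx, hx']
    exact main
end

section
/- Let G be an abelian group, K a field, A a G × G-graded associative unital K-algebra, ζ : G × G → K^* a skew bicharacter, and A_ζ the twisted algebra with product x ∘ y = ζ(α,α')ζ(β,β')^{-1} xy for x ∈ A_{α,β}, y ∈ A_{α',β'}. Let M be a G-graded A-module, M = ⊕_{λ∈G} M[λ], such that A_{α,β}·M[λ] ⊆ M[λ + α + β] for all α, β, λ. Then the formula x ·_ζ m = ζ(α − β, λ) ζ(α, β) · (x m), for x ∈ A_{α,β} and m ∈ M[λ], extended bilinearly, defines an A_ζ-module structure on M, i.e. (x ∘ y) ·_ζ m = x ·_ζ (y ·_ζ m) and 1 ·_ζ m = m. -/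
/-- twisting a `G`-graded module over a `G × G`-graded algebra
by a skew bicharacter yields a module over the twisted algebra. -/
theorem stmt16 {G K A M : Type*} [AddCommGroup G] [DecidableEq G] [Field K]
    [Ring A] [Algebra K A]
    [AddCommGroup M] [Module K M] [Module A M]
    [IsScalarTower K A M] [SMulCommClass K A M]
    (𝒜 : G × G → Submodule K A) [GradedAlgebra 𝒜]
    (ℳ : G → Submodule K M) [DirectSum.Decomposition ℳ]
    (hcompat : ∀ (α β l : G) (x : A) (m : M),
      x ∈ 𝒜 (α, β) → m ∈ ℳ l → x • m ∈ ℳ (l + α + β))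
    (ζ : G → G → Kˣ)
    (hζadd₁ : ∀ α β γ, ζ (α + β) γ = ζ α γ * ζ β γ)
    (hζadd₂ : ∀ α β γ, ζ α (β + γ) = ζ α β * ζ α γ)
    (hζskew : ∀ α β, ζ α β = (ζ β α)⁻¹)
    (hζdiag : ∀ α, ζ α α = 1)
    (mul : A →ₗ[K] A →ₗ[K] A)
    (hmul : ∀ (α β α' β' : G) (x y : A), x ∈ 𝒜 (α, β) → y ∈ 𝒜 (α', β') →
      mul x y = ((ζ α α' * (ζ β β')⁻¹ : Kˣ) : K) • (x * y))
    (act : A →ₗ[K] M →ₗ[K] M)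
    (hact : ∀ (α β l : G) (x : A) (m : M), x ∈ 𝒜 (α, β) → m ∈ ℳ l →
      act x m = ((ζ (α - β) l * ζ α β : Kˣ) : K) • (x • m)) :
    (∀ (x y : A) (m : M), act (mul x y) m = act x (act y m)) ∧
    (∀ m : M, act 1 m = m) := by
  -- basic bicharacter facts
  have hζ0l : ∀ γ, ζ 0 γ = 1 := by
    intro γ
    have h := hζadd₁ 0 0 γ
    rw [add_zero] at h
    exact right_eq_mul.mp h
  have hζl0 : ∀ γ, ζ γ 0 = 1 := by
    intro γ
    rw [hζskew, hζ0l]; simp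
  have hζneg₁ : ∀ α β, ζ (-α) β = (ζ α β)⁻¹ := by
    intro α β
    have h := hζadd₁ α (-α) β
    rw [add_neg_cancel, hζ0l] at h
    exact (inv_eq_of_mul_eq_one_right h.symm).symm
  have hζsub₁ : ∀ α β γ, ζ (α - β) γ = ζ α γ * (ζ β γ)⁻¹ := by
    intro α β γ
    rw [sub_eq_add_neg, hζadd₁, hζneg₁]
  -- the fully homogeneous case of associativity
  have key : ∀ (α β α' β' l : G) (x y : A) (m : M), x ∈ 𝒜 (α, β) → y ∈ 𝒜 (α', β') →
      m ∈ ℳ l → act (mul x y) m = act x (act y m) := by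
    intro α β α' β' l x y m hx hy hm
    have hxy : x * y ∈ 𝒜 (α + α', β + β') := by
      have h := SetLike.mul_mem_graded hx hy
      simpa [Prod.mk_add_mk] using h
    have hym : y • m ∈ ℳ (l + α' + β') := hcompat α' β' l y m hy hm
    rw [hmul α β α' β' x y hx hy, map_smul, LinearMap.smul_apply,
      hact (α + α') (β + β') l (x * y) m hxy hm,
      hact α' β' l y m hy hm, map_smul,
      hact α β (l + α' + β') x (y • m) hx hym,
      mul_smul x y m, smul_smul, smul_smul, smul_smul]
    congr 1
    have hunits : (ζ α α' * (ζ β β')⁻¹) * (ζ (α + α' - (β + β')) l * ζ (α + α') (β + β'))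
        = (ζ (α - β) (l + α' + β') * ζ α β) * (ζ (α' - β') l * ζ α' β') := by
      have hs : ζ α' β = (ζ β α')⁻¹ := hζskew α' β
      simp only [hζadd₁, hζadd₂, hζsub₁, sub_eq_add_neg, hζneg₁, mul_inv]
      rw [hs]
      -- now a commutative-group identity
      ext
      push_cast
      field_simp
    rw [← Units.val_mul, ← Units.val_mul, hunits]
    exact congrArg _ (mul_comm _ _)
  constructor
  · intro x y m
    induction m using DirectSum.Decomposition.inductionOn ℳ with
    | zero => simp
    | homogeneous m' =>
      obtain ⟨l, hm⟩ : ∃ l, (m' : M) ∈ ℳ l := ⟨_, m'.2⟩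
      induction y using DirectSum.Decomposition.inductionOn 𝒜 with
      | zero => simp
      | homogeneous y' =>
        obtain ⟨⟨ay, by'⟩, hy⟩ : ∃ g, (y' : A) ∈ 𝒜 g := ⟨_, y'.2⟩
        induction x using DirectSum.Decomposition.inductionOn 𝒜 with
        | zero => simp
        | homogeneous x' =>
          obtain ⟨⟨ax, bx⟩, hx⟩ : ∃ g, (x' : A) ∈ 𝒜 g := ⟨_, x'.2⟩
          exact key ax bx ay by' l x' y' m' hx hy hm
        | add a b ha hb => simp [map_add, ha, hb]
      | add a b ha hb => simp [map_add, ha, hb]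
    | add a b ha hb => simp [map_add, ha, hb]
  · intro m
    induction m using DirectSum.Decomposition.inductionOn ℳ with
    | zero => simp
    | homogeneous m' =>
      obtain ⟨l, hm⟩ : ∃ l, (m' : M) ∈ ℳ l := ⟨_, m'.2⟩
      have h1 : (1 : A) ∈ 𝒜 (0, 0) := SetLike.one_mem_graded 𝒜
      rw [hact 0 0 l 1 m' h1 hm]
      simp [hζ0l, hζsub₁]
    | add a b ha hb => simp [map_add, ha, hb]
end

section
/- Let G be an abelian group, F a field, A a G-bigraded bialgebra over F, ζ a skew bicharacter on G, and A_ζ the twisted bialgebra (same Δ, ε, twisted product). Let V and V' be G-graded A-modules with A_{α,β}·V[λ] ⊆ V[λ+α+β] (and similarly for V'), and let V_ζ, V'_ζ, (V⊗V')_ζ be the corresponding twisted A_ζ-modules (with V⊗V' regarded as an A-module via Δ, carrying the grading (V⊗V')[ν] = ⊕_{λ+λ'=ν} V[λ]⊗V'[λ']). Then the map ξ : V ⊗ V' → V ⊗ V' defined by ξ(v ⊗ v') = ζ(λ', λ) v ⊗ v' for v ∈ V[λ], v' ∈ V'[λ'] is an isomorphism of A_ζ-modules from (V ⊗ V')_ζ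 to V_ζ ⊗ V'_ζ. -/
open TensorProduct

section zeta
variable {G K : Type*} [AddCommGroup G] [Field K]
variable (ζ : G → G → Kˣ)
    (hζadd₁ : ∀ α β γ, ζ (α + β) γ = ζ α γ * ζ β γ)
    (hζadd₂ : ∀ α β γ, ζ α (β + γ) = ζ α β * ζ α γ)
    (hζskew : ∀ α β, ζ α β = (ζ β α)⁻¹)
    (hζdiag : ∀ α, ζ α α = 1)

include hζadd₁ in
lemma zeta_neg₁ (a b : G) : ζ (-a) b = (ζ a b)⁻¹ := by
  have h0 : ζ 0 b = 1 := by
    have := hζadd₁ 0 0 b; rw [add_zero] at this; exact mul_eq_left.mp this.symm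
  have := hζadd₁ (-a) a b
  rw [neg_add_cancel, h0] at this
  exact eq_inv_of_mul_eq_one_left this.symm

include hζadd₂ in
lemma zeta_neg₂ (a b : G) : ζ a (-b) = (ζ a b)⁻¹ := by
  have h0 : ζ a 0 = 1 := by
    have := hζadd₂ a 0 0; rw [add_zero] at this; exact mul_eq_left.mp this.symm
  have := hζadd₂ a (-b) b
  rw [neg_add_cancel, h0] at this
  exact eq_inv_of_mul_eq_one_left this.symm

include hζadd₁ hζadd₂ hζskew hζdiag in
lemma zeta_key (α β γ l l' : G) :
    ζ (α - β) (l + l') * ζ α β * ζ (l' + -γ + β) (l + α + γ)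
      = ζ l' l * ((ζ (α - γ) l * ζ α γ) * (ζ (-γ - β) l' * ζ (-γ) β)) := by
  simp only [sub_eq_add_neg, hζadd₁, hζadd₂, zeta_neg₁ ζ hζadd₁, zeta_neg₂ ζ hζadd₂,
    hζdiag, inv_one, mul_one, one_mul]
  simp only [hζskew l' α, hζskew β α, hζskew l' γ, hζskew γ β, hζskew l' l, hζskew γ α]
  rw [← Units.val_inj]
  push_cast
  field_simp

end zeta

section twist
variable {G K V V' : Type*} [AddCommGroup G] [DecidableEq G] [Field K]
    [AddCommGroup V] [Module K V] [AddCommGroup V'] [Module K V']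
    (𝒱 : G → Submodule K V) [DirectSum.Decomposition 𝒱]
    (𝒱' : G → Submodule K V') [DirectSum.Decomposition 𝒱']

/-- A map rescaling each homogeneous component `𝒱 l ⊗ 𝒱' l'` by `c (l, l')`. -/
noncomputable def twistMap (c : G × G → K) : (V ⊗[K] V') →ₗ[K] (V ⊗[K] V') :=
  (DirectSum.toModule K (G × G) (V ⊗[K] V') fun p =>
      c p • (TensorProduct.map (𝒱 p.1).subtype (𝒱' p.2).subtype)) ∘ₗ
    (TensorProduct.directSum K K (fun l => 𝒱 l) (fun l' => 𝒱' l')).toLinearMap ∘ₗ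
    (TensorProduct.congr (DirectSum.decomposeLinearEquiv 𝒱)
      (DirectSum.decomposeLinearEquiv 𝒱')).toLinearMap

omit [AddCommGroup G] in
lemma twistMap_tmul (c : G × G → K) (l l' : G) (v : V) (v' : V')
    (hv : v ∈ 𝒱 l) (hv' : v' ∈ 𝒱' l') :
    twistMap 𝒱 𝒱' c (v ⊗ₜ[K] v') = c (l, l') • (v ⊗ₜ[K] v') := by
  have h1 : DirectSum.decompose 𝒱 v = DirectSum.lof K G (fun l => 𝒱 l) l ⟨v, hv⟩ := by
    rw [DirectSum.lof_eq_of]; exact DirectSum.decompose_of_mem 𝒱 hv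
  have h2 : DirectSum.decompose 𝒱' v' = DirectSum.lof K G (fun l => 𝒱' l) l' ⟨v', hv'⟩ := by
    rw [DirectSum.lof_eq_of]; exact DirectSum.decompose_of_mem 𝒱' hv'
  simp [twistMap, DirectSum.decomposeLinearEquiv_apply, h1, h2, TensorProduct.directSum_lof_tmul_lof, DirectSum.toModule_lof]

omit [AddCommGroup G] in
lemma span_homog :
    Submodule.span K {t : V ⊗[K] V' | ∃ (l l' : G) (v : V) (v' : V'),
      v ∈ 𝒱 l ∧ v' ∈ 𝒱' l' ∧ t = v ⊗ₜ[K] v'} = ⊤ := by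
  classical
  rw [eq_top_iff]
  rintro t -
  induction t with
  | zero => exact Submodule.zero_mem _
  | add a b ha hb => exact Submodule.add_mem _ ha hb
  | tmul v v' =>
    rw [← DirectSum.sum_support_decompose 𝒱 v, ← DirectSum.sum_support_decompose 𝒱' v',
      TensorProduct.sum_tmul]
    refine Submodule.sum_mem _ fun l _ => ?_
    rw [TensorProduct.tmul_sum]
    refine Submodule.sum_mem _ fun l' _ => ?_
    exact Submodule.subset_span ⟨l, l', _, _, SetLike.coe_mem _, SetLike.coe_mem _, rfl⟩

end twist


/-- The action of a bialgebra `A` on a tensor product `V ⊗ V'` of two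
`A`-modules (given by their action maps `ρV`, `ρV'`), via the coproduct:
`a · (v ⊗ v') = Σ (a₍₁₎ · v) ⊗ (a₍₂₎ · v')`. -/
noncomputable def tensorAct {K A V V' : Type*} [CommRing K] [Ring A] [Bialgebra K A]
    [AddCommGroup V] [Module K V] [AddCommGroup V'] [Module K V']
    (ρV : A →ₗ[K] V →ₗ[K] V) (ρV' : A →ₗ[K] V' →ₗ[K] V') :
    A →ₗ[K] (V ⊗[K] V') →ₗ[K] (V ⊗[K] V') :=
  (TensorProduct.homTensorHomMap (RingHom.id K) V V' V V') ∘ₗ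
    (TensorProduct.map ρV ρV') ∘ₗ (Coalgebra.comul (R := K))

/-- for `G`-graded modules `V`, `V'` over a `G`-bigraded
bialgebra `A`, the map `ξ(v ⊗ v') = ζ(λ',λ) v ⊗ v'` is an isomorphism of
`A_ζ`-modules `(V ⊗ V')_ζ ≅ V_ζ ⊗ V'_ζ`. -/
theorem stmt18 {G K A V V' : Type*} [AddCommGroup G] [DecidableEq G] [Field K]
    [Ring A] [Bialgebra K A]
    [AddCommGroup V] [Module K V] [AddCommGroup V'] [Module K V']
    (𝒜 : G × G → Submodule K A) [GradedAlgebra 𝒜]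
    (hΔ : ∀ (α β : G) (x : A), x ∈ 𝒜 (α, β) →
      Coalgebra.comul (R := K) x ∈
        ⨆ γ : G, LinearMap.range
          (TensorProduct.map (𝒜 (α, γ)).subtype (𝒜 (-γ, β)).subtype))
    (hε : ∀ (α β : G) (x : A), x ∈ 𝒜 (α, β) → α + β ≠ 0 →
      Coalgebra.counit (R := K) x = 0)
    (𝒱 : G → Submodule K V) [DirectSum.Decomposition 𝒱]
    (𝒱' : G → Submodule K V') [DirectSum.Decomposition 𝒱']
    (ρ : A →ₗ[K] V →ₗ[K] V)
    (hρ1 : ρ 1 = LinearMap.id) (hρm : ∀ a b : A, ρ (a * b) = ρ a ∘ₗ ρ b)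
    (ρ' : A →ₗ[K] V' →ₗ[K] V')
    (hρ'1 : ρ' 1 = LinearMap.id) (hρ'm : ∀ a b : A, ρ' (a * b) = ρ' a ∘ₗ ρ' b)
    (hgrV : ∀ (α β l : G) (x : A) (v : V),
      x ∈ 𝒜 (α, β) → v ∈ 𝒱 l → ρ x v ∈ 𝒱 (l + α + β))
    (hgrV' : ∀ (α β l : G) (x : A) (v' : V'),
      x ∈ 𝒜 (α, β) → v' ∈ 𝒱' l → ρ' x v' ∈ 𝒱' (l + α + β))
    (ζ : G → G → Kˣ)
    (hζadd₁ : ∀ α β γ, ζ (α + β) γ = ζ α γ * ζ β γ)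
    (hζadd₂ : ∀ α β γ, ζ α (β + γ) = ζ α β * ζ α γ)
    (hζskew : ∀ α β, ζ α β = (ζ β α)⁻¹)
    (hζdiag : ∀ α, ζ α α = 1)
    (ρζ : A →ₗ[K] V →ₗ[K] V)
    (hρζ : ∀ (α β l : G) (x : A) (v : V), x ∈ 𝒜 (α, β) → v ∈ 𝒱 l →
      ρζ x v = ((ζ (α - β) l * ζ α β : Kˣ) : K) • ρ x v)
    (ρζ' : A →ₗ[K] V' →ₗ[K] V')
    (hρζ' : ∀ (α β l : G) (x : A) (v' : V'), x ∈ 𝒜 (α, β) → v' ∈ 𝒱' l →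
      ρζ' x v' = ((ζ (α - β) l * ζ α β : Kˣ) : K) • ρ' x v')
    (actT : A →ₗ[K] (V ⊗[K] V') →ₗ[K] (V ⊗[K] V'))
    (hactT : ∀ (α β l l' : G) (x : A) (v : V) (v' : V'),
      x ∈ 𝒜 (α, β) → v ∈ 𝒱 l → v' ∈ 𝒱' l' →
      actT x (v ⊗ₜ[K] v')
        = ((ζ (α - β) (l + l') * ζ α β : Kˣ) : K) • (tensorAct ρ ρ' x (v ⊗ₜ[K] v')))
    (ξ : (V ⊗[K] V') →ₗ[K] (V ⊗[K] V'))
    (hξ : ∀ (l l' : G) (v : V) (v' : V'), v ∈ 𝒱 l → v' ∈ 𝒱' l' →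
      ξ (v ⊗ₜ[K] v') = ((ζ l' l : Kˣ) : K) • (v ⊗ₜ[K] v')) :
    Function.Bijective ξ ∧
    ∀ (x : A) (t : V ⊗[K] V'), ξ (actT x t) = tensorAct ρζ ρζ' x (ξ t) := by
  
  classical
  have hspan := span_homog 𝒱 𝒱'
  constructor
  · -- bijectivity
    set η := twistMap 𝒱 𝒱' (fun p => ((ζ p.1 p.2 : Kˣ) : K)) with hη
    have h1 : η ∘ₗ ξ = LinearMap.id := by
      refine LinearMap.ext_on hspan ?_
      rintro t ⟨l, l', v, v', hv, hv', rfl⟩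
      simp only [LinearMap.comp_apply, LinearMap.id_apply]
      rw [hξ l l' v v' hv hv', map_smul, hη, twistMap_tmul 𝒱 𝒱' _ l l' v v' hv hv',
        smul_smul]
      have hc : ((ζ l' l : Kˣ) : K) * ((ζ l l' : Kˣ) : K) = 1 := by
        rw [hζskew l' l, ← Units.val_mul, inv_mul_cancel, Units.val_one]
      simpa using hc ▸ (one_smul K (v ⊗ₜ[K] v'))
    have h2 : ξ ∘ₗ η = LinearMap.id := by
      refine LinearMap.ext_on hspan ?_
      rintro t ⟨l, l', v, v', hv, hv', rfl⟩
      simp only [LinearMap.comp_apply, LinearMap.id_apply]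
      rw [hη, twistMap_tmul 𝒱 𝒱' _ l l' v v' hv hv', map_smul, hξ l l' v v' hv hv',
        smul_smul]
      have hc : ((ζ l l' : Kˣ) : K) * ((ζ l' l : Kˣ) : K) = 1 := by
        rw [hζskew l' l, ← Units.val_mul, mul_inv_cancel, Units.val_one]
      simpa using hc ▸ (one_smul K (v ⊗ₜ[K] v'))
    exact Function.bijective_iff_has_inverse.mpr
      ⟨η, fun t => LinearMap.congr_fun h1 t, fun t => LinearMap.congr_fun h2 t⟩
  · -- A_ζ-linearity
    have key : ∀ (p : G × G) (y : A), y ∈ 𝒜 p →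
        ∀ t, ξ (actT y t) = tensorAct ρζ ρζ' y (ξ t) := by
      rintro ⟨α, β⟩ y hy
      suffices h : ξ ∘ₗ actT y = tensorAct ρζ ρζ' y ∘ₗ ξ by
        exact fun t => LinearMap.congr_fun h t
      refine LinearMap.ext_on hspan ?_
      rintro t ⟨l, l', v, v', hv, hv', rfl⟩
      simp only [LinearMap.comp_apply]
      rw [hactT α β l l' y v v' hy hv hv', map_smul, hξ l l' v v' hv hv', map_smul]
      set F : A ⊗[K] A →ₗ[K] V ⊗[K] V' :=
        ((TensorProduct.homTensorHomMap (RingHom.id K) V V' V V').flip (v ⊗ₜ[K] v')) ∘ₗ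
          TensorProduct.map ρ ρ' with hF
      set Fζ : A ⊗[K] A →ₗ[K] V ⊗[K] V' :=
        ((TensorProduct.homTensorHomMap (RingHom.id K) V V' V V').flip (v ⊗ₜ[K] v')) ∘ₗ
          TensorProduct.map ρζ ρζ' with hFζ
      have eF : tensorAct ρ ρ' y (v ⊗ₜ[K] v') = F (Coalgebra.comul (R := K) y) := rfl
      have eFζ : tensorAct ρζ ρζ' y (v ⊗ₜ[K] v') = Fζ (Coalgebra.comul (R := K) y) := rfl
      rw [eF, eFζ]
      refine Submodule.iSup_induction (M := A ⊗[K] A)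
        (motive := fun w => ((ζ (α - β) (l + l') * ζ α β : Kˣ) : K) • ξ (F w)
          = ((ζ l' l : Kˣ) : K) • Fζ w) _ (hΔ α β y hy) ?_ (by simp) ?_
      · -- homogeneous pieces
        rintro γ w ⟨u, rfl⟩
        induction u with
        | zero => simp
        | add a b ha hb => simp only [map_add, smul_add, ha, hb]
        | tmul a b =>
          obtain ⟨x₁, hx₁⟩ := a
          obtain ⟨x₂, hx₂⟩ := b
          have hFval : F (x₁ ⊗ₜ[K] x₂) = (ρ x₁ v) ⊗ₜ[K] (ρ' x₂ v') := by
            simp [hF, TensorProduct.homTensorHomMap_apply]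
          have hFζval : Fζ (x₁ ⊗ₜ[K] x₂) = (ρζ x₁ v) ⊗ₜ[K] (ρζ' x₂ v') := by
            simp [hFζ, TensorProduct.homTensorHomMap_apply]
          simp only [TensorProduct.map_tmul, Submodule.coe_subtype, hFval, hFζval]
          rw [hξ (l + α + γ) (l' + -γ + β) _ _ (hgrV α γ l x₁ v hx₁ hv)
            (hgrV' (-γ) β l' x₂ v' hx₂ hv')]
          rw [hρζ α γ l x₁ v hx₁ hv, hρζ' (-γ) β l' x₂ v' hx₂ hv']
          simp only [TensorProduct.tmul_smul, ← TensorProduct.smul_tmul', ← smul_tmul,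
            smul_smul]
          congr 1
          have hk := congrArg Units.val
            (zeta_key ζ hζadd₁ hζadd₂ hζskew hζdiag α β γ l l')
          push_cast at hk ⊢
          linear_combination hk
      · -- additivity
        intro w₁ w₂ h₁ h₂
        simp only [map_add, smul_add, h₁, h₂]
    intro x t
    conv_lhs => rw [← DirectSum.sum_support_decompose 𝒜 x]
    conv_rhs => rw [← DirectSum.sum_support_decompose 𝒜 x]
    rw [map_sum, LinearMap.sum_apply, map_sum, map_sum, LinearMap.sum_apply]
    exact Finset.sum_congr rfl fun p _ => key p _ (SetLike.coe_mem _) t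
end
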